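/- Fix λ > 0, t > 0, and n > 0. The function τ ↦ -(λ/t)(τ + (n/(8λ²)) ln(1 + t/τ)) on (0,∞) attains its maximum at τ₀ = (t/2)(√(1 + n/(2λ²t)) - 1), and the maximum value equals -λ G(1/(λ²t)), where G(s) = (1/2)(√(1 + ns/2) - 1) + (n/8)s ln(1 + 2/(√(1 + ns/2) - 1)). -/

import Mathlib

open Real Set

theorem stmt_3 (lam t n : ℝ) (hlam : 0 < lam) (ht : 0 < t) (hn : 0 < n)
    (f G : ℝ → ℝ)
    (hf : ∀ τ, f τ = -(lam/t) * (τ + (n/(8*lam^2)) * Real.log (1 + t/τ)))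
    (hG : ∀ s, G s = (1/2) * (Real.sqrt (1 + (n/2)*s) - 1) +
      (n/8) * s * Real.log (1 + 2 / (Real.sqrt (1 + (n/2)*s) - 1))) :
    IsMaxOn f (Set.Ioi 0) ((t/2) * (Real.sqrt (1 + n/(2*lam^2*t)) - 1)) ∧
    f ((t/2) * (Real.sqrt (1 + n/(2*lam^2*t)) - 1)) = -lam * G (1/(lam^2*t)) := by
  have hlt : (0:ℝ) < 2*lam^2*t := by positivity
  set r := Real.sqrt (1 + n/(2*lam^2*t)) with hr
  have hx : 0 < n/(2*lam^2*t) := by positivity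
  have hr2 : r^2 = 1 + n/(2*lam^2*t) := Real.sq_sqrt (by positivity)
  have hr1 : 1 < r := by nlinarith [Real.sqrt_nonneg (1 + n/(2*lam^2*t)), hr2]
  set τ0 := (t/2) * (r - 1) with hτ0
  have hτ0pos : 0 < τ0 := by
    apply mul_pos (by linarith) (by linarith)
  set c := n/(8*lam^2) with hc
  have hcpos : 0 < c := by positivity
  have hkey : c * t = τ0^2 + t*τ0 := by
    have h1 : τ0^2 + t*τ0 = t^2/4 * (r^2 - 1) := by rw [hτ0]; ring
    rw [h1, hr2, hc]
    field_simp
    ring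
  have hcval : c = (τ0^2 + t*τ0)/t := by
    rw [eq_div_iff ht.ne']; exact hkey
  have hlog0 : 1 + t/τ0 = 1 + 2/(r-1) := by
    rw [hτ0]
    congr 1
    rw [div_eq_div_iff (by positivity) (by linarith)]
    ring
  constructor
  · intro τ hτ
    simp only [Set.mem_Ioi] at hτ
    simp only [mem_setOf_eq, hf]
    have hτt : 0 < τ + t := by linarith
    have hτ0t : 0 < τ0 + t := by linarith
    -- log inequality: log a - log b ≥ 1 - b/a
    set a := 1 + t/τ with ha
    set b := 1 + t/τ0 with hb
    have hapos : 0 < a := by rw [ha]; positivity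
    have hbpos : 0 < b := by rw [hb]; positivity
    have hlog : 1 - b/a ≤ Real.log a - Real.log b := by
      have h1 : Real.log (b/a) ≤ b/a - 1 := Real.log_le_sub_one_of_pos (by positivity)
      rw [Real.log_div hbpos.ne' hapos.ne'] at h1
      linarith
    have hid : (τ - τ0) + c * (1 - b/a) = (τ - τ0)^2/(τ + t) := by
      rw [hcval, ha, hb]
      field_simp
      ring
    have hnn : 0 ≤ (τ - τ0)^2/(τ + t) := by positivity
    have hmain : τ0 + c * Real.log b ≤ τ + c * Real.log a := by
      nlinarith [mul_le_mul_of_nonneg_left hlog hcpos.le]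
    have hlt2 : 0 < lam/t := by positivity
    nlinarith [mul_le_mul_of_nonneg_left hmain hlt2.le]
  · rw [hf, hG]
    have hs : 1 + (n/2) * (1/(lam^2*t)) = 1 + n/(2*lam^2*t) := by
      field_simp
    rw [hs, ← hr, hlog0, hτ0, hc]
    field_simp
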